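/- arXiv:2407.00857 — 2 statements merged into one kernel-verified Lean document; each statement's English description precedes it below -/
import Mathlib

section
/- Let K be a bounded operator on H₁ and L a bounded operator on H₂. Let {xₙ}ₙ≥1 be a K-frame for H₁ and {yₙ}ₙ≥1 an L-frame for H₂, with analysis operators θ₁ and θ₂ respectively. If the closure of the range of θ₁ equals the orthogonal complement of the range of θ₂ in ℓ², then {xₙ ⊕ yₙ}ₙ≥1 is a K ⊕ L-minimal frame for H₁ ⊕ H₂, i.e. a K ⊕ L-frame whose synthesis operator is injective. -/
noncomputable section

open scoped ENNReal

/-- The sequence of direct sums `xₙ ⊕ yₙ` in the super Hilbert space `H₁ ⊕ H₂`,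
realized as `WithLp 2 (H₁ × H₂)`. -/
def pairSeq {H₁ H₂ : Type*} [NormedAddCommGroup H₁] [NormedAddCommGroup H₂]
    (x : ℕ → H₁) (y : ℕ → H₂) : ℕ → WithLp 2 (H₁ × H₂) :=
  fun n => (WithLp.equiv 2 (H₁ × H₂)).symm (x n, y n)

/-- A sequence `{xₙ}` is a Bessel sequence: there is `B > 0` with
`∑ₙ |⟨v, xₙ⟩|² ≤ B‖v‖²` for all `v` (in particular the series converges). -/
def IsBessel {H : Type*} [NormedAddCommGroup H] [InnerProductSpace ℂ H] (x : ℕ → H) : Prop :=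
  ∃ B : ℝ, 0 < B ∧ ∀ v : H, Summable (fun n => ‖(inner ℂ v (x n) : ℂ)‖ ^ 2) ∧
    ∑' n, ‖(inner ℂ v (x n) : ℂ)‖ ^ 2 ≤ B * ‖v‖ ^ 2

/-- A sequence `{xₙ}` is a `K`-frame: there are `A, B > 0` with
`A‖K*v‖² ≤ ∑ₙ |⟨v, xₙ⟩|² ≤ B‖v‖²` for all `v`. -/
def IsKFrame {H : Type*} [NormedAddCommGroup H] [InnerProductSpace ℂ H] [CompleteSpace H]
    (K : H →L[ℂ] H) (x : ℕ → H) : Prop :=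
  ∃ A B : ℝ, 0 < A ∧ 0 < B ∧ ∀ v : H, Summable (fun n => ‖(inner ℂ v (x n) : ℂ)‖ ^ 2) ∧
    A * ‖K.adjoint v‖ ^ 2 ≤ ∑' n, ‖(inner ℂ v (x n) : ℂ)‖ ^ 2 ∧
    ∑' n, ‖(inner ℂ v (x n) : ℂ)‖ ^ 2 ≤ B * ‖v‖ ^ 2

/-- The operator `K ⊕ L` on the super Hilbert space `H₁ ⊕ H₂`,
`(K ⊕ L)(x ⊕ y) = Kx ⊕ Ly`. -/
def dsum {H₁ H₂ : Type*}
    [NormedAddCommGroup H₁] [InnerProductSpace ℂ H₁]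
    [NormedAddCommGroup H₂] [InnerProductSpace ℂ H₂]
    (K : H₁ →L[ℂ] H₁) (L : H₂ →L[ℂ] H₂) :
    WithLp 2 (H₁ × H₂) →L[ℂ] WithLp 2 (H₁ × H₂) :=
  ((WithLp.prodContinuousLinearEquiv 2 ℂ H₁ H₂).symm : (H₁ × H₂) →L[ℂ] WithLp 2 (H₁ × H₂)) ∘L
    (K.prodMap L) ∘L
    ((WithLp.prodContinuousLinearEquiv 2 ℂ H₁ H₂) : WithLp 2 (H₁ × H₂) →L[ℂ] (H₁ × H₂))

section Aux

lemma lp_norm_sq_eq (f : lp (fun _ : ℕ => ℂ) 2) : ‖f‖ ^ 2 = ∑' n, ‖f n‖ ^ 2 := by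
  have h := lp.norm_rpow_eq_tsum (p := 2) (by norm_num) f
  have h2 : ((2 : ℝ≥0∞).toReal) = (2 : ℝ) := by norm_num
  rw [h2] at h
  calc ‖f‖ ^ 2 = ‖f‖ ^ (2 : ℝ) := by
        rw [← Real.rpow_natCast ‖f‖ 2]; norm_num
    _ = ∑' n, ‖f n‖ ^ (2 : ℝ) := h
    _ = ∑' n, ‖f n‖ ^ 2 := by
        refine tsum_congr fun n => ?_
        rw [← Real.rpow_natCast ‖f n‖ 2]; norm_num

lemma lp_summable_sq (f : lp (fun _ : ℕ => ℂ) 2) : Summable (fun n => ‖f n‖ ^ 2) := by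
  have h := (memℓp_gen_iff (p := 2) (by norm_num)).1 (lp.memℓp f)
  have h2 : ((2 : ℝ≥0∞).toReal) = (2 : ℝ) := by norm_num
  rw [h2] at h
  refine h.congr fun n => ?_
  rw [← Real.rpow_natCast ‖f n‖ 2]; norm_num

variable {H₁ H₂ : Type*}
  [NormedAddCommGroup H₁] [InnerProductSpace ℂ H₁] [CompleteSpace H₁]
  [NormedAddCommGroup H₂] [InnerProductSpace ℂ H₂] [CompleteSpace H₂]

lemma dsum_adjoint (K : H₁ →L[ℂ] H₁) (L : H₂ →L[ℂ] H₂) :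
    dsum K.adjoint L.adjoint = (dsum K L).adjoint := by
  rw [ContinuousLinearMap.eq_adjoint_iff]
  intro a b
  show (inner ℂ ((WithLp.equiv 2 (H₁ × H₂)).symm (K.adjoint a.fst, L.adjoint a.snd)) b : ℂ)
    = inner ℂ a ((WithLp.equiv 2 (H₁ × H₂)).symm (K b.fst, L b.snd))
  simp [WithLp.prod_inner_apply, ContinuousLinearMap.adjoint_inner_left]

end Aux

variable {H₁ H₂ : Type*}
  [NormedAddCommGroup H₁] [InnerProductSpace ℂ H₁] [CompleteSpace H₁]
  [TopologicalSpace.SeparableSpace H₁]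
  [NormedAddCommGroup H₂] [InnerProductSpace ℂ H₂] [CompleteSpace H₂]
  [TopologicalSpace.SeparableSpace H₂]

set_option maxHeartbeats 1000000

set_option linter.unusedSectionVars false

/-- if `{xₙ}` is a `K`-frame for `H₁` and `{yₙ}` is an `L`-frame for `H₂` whose
analysis operators `θ₁, θ₂` satisfy `cl(R(θ₁)) = R(θ₂)^⊥` in `ℓ²`, then `{xₙ ⊕ yₙ}` is a
`K ⊕ L`-minimal frame for `H₁ ⊕ H₂`: a `K ⊕ L`-frame whose synthesis operator is injective. -/
theorem pair_kframe_minimal_of_closure_range (K : H₁ →L[ℂ] H₁) (L : H₂ →L[ℂ] H₂)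
    (x : ℕ → H₁) (y : ℕ → H₂)
    (hx : IsKFrame K x) (hy : IsKFrame L y)
    (θ₁ : H₁ → lp (fun _ : ℕ => ℂ) 2)
    (hθ₁ : ∀ (u : H₁) (n : ℕ), θ₁ u n = (inner ℂ u (x n) : ℂ))
    (θ₂ : H₂ → lp (fun _ : ℕ => ℂ) 2)
    (hθ₂ : ∀ (v : H₂) (n : ℕ), θ₂ v n = (inner ℂ v (y n) : ℂ))
    (hperp : closure (Set.range θ₁) =
      {a : lp (fun _ : ℕ => ℂ) 2 | ∀ b ∈ Set.range θ₂, (inner ℂ a b : ℂ) = 0})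
    (T : lp (fun _ : ℕ => ℂ) 2 →L[ℂ] WithLp 2 (H₁ × H₂))
    (hT : ∀ a : lp (fun _ : ℕ => ℂ) 2, HasSum (fun n => a n • pairSeq x y n) (T a)) :
    IsKFrame (dsum K L) (pairSeq x y) ∧ Function.Injective T := by
  obtain ⟨A₁, B₁, hA₁, hB₁, hx'⟩ := hx
  obtain ⟨A₂, B₂, hA₂, hB₂, hy'⟩ := hy
  -- orthogonality of the two analysis ranges
  have horth : ∀ (u : H₁) (v : H₂), (inner ℂ (θ₁ u) (θ₂ v) : ℂ) = 0 := by
    intro u v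
    have h1 : θ₁ u ∈ closure (Set.range θ₁) := subset_closure ⟨u, rfl⟩
    rw [hperp] at h1
    exact h1 (θ₂ v) ⟨v, rfl⟩
  -- inner ℂ products with the pair sequence
  have hinner : ∀ (v : WithLp 2 (H₁ × H₂)) (n : ℕ),
      (inner ℂ v (pairSeq x y n) : ℂ) = (θ₁ v.fst + θ₂ v.snd) n := by
    intro v n
    have hc : (θ₁ v.fst + θ₂ v.snd) n = θ₁ v.fst n + θ₂ v.snd n := rfl
    rw [hc, hθ₁, hθ₂]
    show (inner ℂ v.fst (x n) : ℂ) + inner ℂ v.snd (y n) = _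
    rfl
  constructor
  · refine ⟨min A₁ A₂, B₁ + B₂, lt_min hA₁ hA₂, by positivity, ?_⟩
    intro v
    obtain ⟨hs₁, hl₁, hu₁⟩ := hx' v.fst
    obtain ⟨hs₂, hl₂, hu₂⟩ := hy' v.snd
    have hfun : (fun n => ‖(inner ℂ v (pairSeq x y n) : ℂ)‖ ^ 2)
        = fun n => ‖(θ₁ v.fst + θ₂ v.snd) n‖ ^ 2 := by
      funext n; rw [hinner]
    have hn1 : ‖θ₁ v.fst‖ ^ 2 = ∑' n, ‖(inner ℂ v.fst (x n) : ℂ)‖ ^ 2 := by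
      rw [lp_norm_sq_eq]
      exact tsum_congr fun n => by rw [hθ₁]
    have hn2 : ‖θ₂ v.snd‖ ^ 2 = ∑' n, ‖(inner ℂ v.snd (y n) : ℂ)‖ ^ 2 := by
      rw [lp_norm_sq_eq]
      exact tsum_congr fun n => by rw [hθ₂]
    have htsum : ∑' n, ‖(inner ℂ v (pairSeq x y n) : ℂ)‖ ^ 2
        = (∑' n, ‖(inner ℂ v.fst (x n) : ℂ)‖ ^ 2) + ∑' n, ‖(inner ℂ v.snd (y n) : ℂ)‖ ^ 2 := by
      rw [hfun, ← lp_norm_sq_eq, ← hn1, ← hn2]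
      simpa [pow_two] using
        norm_add_sq_eq_norm_sq_add_norm_sq_of_inner_eq_zero (𝕜 := ℂ) _ _ (horth v.fst v.snd)
    have hadjnorm : ‖(dsum K L).adjoint v‖ ^ 2 = ‖K.adjoint v.fst‖ ^ 2 + ‖L.adjoint v.snd‖ ^ 2 := by
      rw [← dsum_adjoint]
      exact WithLp.prod_norm_sq_eq_of_L2 _
    have hvnorm : ‖v.fst‖ ^ 2 + ‖v.snd‖ ^ 2 = ‖v‖ ^ 2 := (WithLp.prod_norm_sq_eq_of_L2 v).symm
    refine ⟨by rw [hfun]; exact lp_summable_sq _, ?_, ?_⟩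
    · rw [htsum, hadjnorm]
      have h1 : min A₁ A₂ * (‖K.adjoint v.fst‖ ^ 2 + ‖L.adjoint v.snd‖ ^ 2)
          ≤ A₁ * ‖K.adjoint v.fst‖ ^ 2 + A₂ * ‖L.adjoint v.snd‖ ^ 2 := by
        rw [mul_add]
        gcongr
        · exact min_le_left _ _
        · exact min_le_right _ _
      exact h1.trans (add_le_add hl₁ hl₂)
    · rw [htsum]
      refine (add_le_add hu₁ hu₂).trans ?_
      rw [← hvnorm, add_mul, mul_add, mul_add]
      have hq1 : 0 ≤ B₁ * ‖v.snd‖ ^ 2 := mul_nonneg hB₁.le (sq_nonneg _)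
      have hq2 : 0 ≤ B₂ * ‖v.fst‖ ^ 2 := mul_nonneg hB₂.le (sq_nonneg _)
      linarith
  · -- injectivity
    have hker : ∀ a : lp (fun _ : ℕ => ℂ) 2, T a = 0 → a = 0 := by
      intro a ha
      have hbmem : Memℓp (fun n => (starRingEnd ℂ) (a n)) 2 := by
        apply memℓp_gen
        have h := (memℓp_gen_iff (p := 2) (by norm_num)).1 (lp.memℓp a)
        simpa using h
      set b : lp (fun _ : ℕ => ℂ) 2 := ⟨fun n => (starRingEnd ℂ) (a n), hbmem⟩ with hbdef
      have hzero : ∀ w : WithLp 2 (H₁ × H₂),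
          HasSum (fun n => a n * (inner ℂ w (pairSeq x y n) : ℂ)) 0 := by
        intro w
        have h1 := (innerSL ℂ w).hasSum (hT a)
        rw [ha] at h1
        simpa [inner_smul_right] using h1
      have hbθ₁ : ∀ u : H₁, (inner ℂ b (θ₁ u) : ℂ) = 0 := by
        intro u
        have h2 := lp.hasSum_inner (𝕜 := ℂ) b (θ₁ u)
        have h3 := hzero ((WithLp.equiv 2 (H₁ × H₂)).symm (u, 0))
        have heq : (fun n => a n *
            (inner ℂ ((WithLp.equiv 2 (H₁ × H₂)).symm (u, 0)) (pairSeq x y n) : ℂ))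
            = fun n => (inner ℂ (b n) (θ₁ u n) : ℂ) := by
          funext n
          rw [hinner]
          show a n * (θ₁ u n + θ₂ (0 : H₂) n) = inner ℂ ((starRingEnd ℂ) (a n)) (θ₁ u n)
          rw [hθ₂]
          simp [RCLike.inner_apply, mul_comm]
        rw [heq] at h3
        exact h2.unique h3
      have hbθ₂ : ∀ w : H₂, (inner ℂ b (θ₂ w) : ℂ) = 0 := by
        intro w
        have h2 := lp.hasSum_inner (𝕜 := ℂ) b (θ₂ w)
        have h3 := hzero ((WithLp.equiv 2 (H₁ × H₂)).symm (0, w))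
        have heq : (fun n => a n *
            (inner ℂ ((WithLp.equiv 2 (H₁ × H₂)).symm (0, w)) (pairSeq x y n) : ℂ))
            = fun n => (inner ℂ (b n) (θ₂ w n) : ℂ) := by
          funext n
          rw [hinner]
          show a n * (θ₁ (0 : H₁) n + θ₂ w n) = inner ℂ ((starRingEnd ℂ) (a n)) (θ₂ w n)
          rw [hθ₁]
          simp [RCLike.inner_apply, mul_comm]
        rw [heq] at h3
        exact h2.unique h3
      have hbmem2 : b ∈ closure (Set.range θ₁) := by
        rw [hperp]; rintro c ⟨w, rfl⟩; exact hbθ₂ w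
      have hsub : closure (Set.range θ₁) ⊆ {c : lp (fun _ : ℕ => ℂ) 2 | (inner ℂ b c : ℂ) = 0} :=
        closure_minimal (by rintro c ⟨u, rfl⟩; exact hbθ₁ u)
          (isClosed_eq (innerSL ℂ b).continuous continuous_const)
      have hb0 : b = 0 := inner_self_eq_zero.1 (hsub hbmem2)
      apply lp.ext
      funext n
      have h5 : (starRingEnd ℂ) (a n) = 0 := by
        have h6 := congrArg (fun f : lp (fun _ : ℕ => ℂ) 2 => f n) hb0
        simpa [hbdef] using h6
      have h7 := congrArg (starRingEnd ℂ) h5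
      simpa using h7
    intro p q h
    have := hker (p - q) (by rw [map_sub, h, sub_self])
    exact sub_eq_zero.mp this
end
end

section
/- Let K be a nonzero bounded operator on H₁ and L a nonzero bounded operator on H₂, and suppose {xₙ ⊕ yₙ}ₙ≥1 is a K ⊕ L-orthonormal basis for H₁ ⊕ H₂. Then: (a) {K*(xₙ) ⊕ L*(yₙ)}ₙ≥1 is the unique K ⊕ L-dual frame to {xₙ ⊕ yₙ}ₙ≥1; (b) {xₙ}ₙ≥1 is a K-frame for H₁ that is not K-minimal and {K*(xₙ)}ₙ≥1 is a K-dual frame to it; (c) {yₙ}ₙ≥1 is an L-frame for H₂ that is not L-minimal and {L*(yₙ)}ₙ≥1 is an L-dual frame to it. -/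
noncomputable section

open scoped ENNReal

variable {H₁ H₂ : Type*}
  [NormedAddCommGroup H₁] [InnerProductSpace ℂ H₁] [CompleteSpace H₁]
  [TopologicalSpace.SeparableSpace H₁]
  [NormedAddCommGroup H₂] [InnerProductSpace ℂ H₂] [CompleteSpace H₂]
  [TopologicalSpace.SeparableSpace H₂]

/-- A Bessel sequence `{fₙ}` is a `K`-dual frame to `{xₙ}` if `Kv = ∑ₙ ⟨v, fₙ⟩ xₙ` for all `v`
(with the inner ℂ product linear in `v`). -/
def IsKDual {H : Type*} [NormedAddCommGroup H] [InnerProductSpace ℂ H] [CompleteSpace H]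
    (K : H →L[ℂ] H) (f x : ℕ → H) : Prop :=
  IsBessel f ∧ ∀ v : H, HasSum (fun n => (inner ℂ (f n) v : ℂ) • x n) (K v)

/-- A sequence `{xₙ}` is a `K`-orthonormal basis if it is an orthonormal system and a
Parseval `K`-frame: `∑ₙ |⟨v, xₙ⟩|² = ‖K*v‖²` for all `v`. -/
def IsKONB {H : Type*} [NormedAddCommGroup H] [InnerProductSpace ℂ H] [CompleteSpace H]
    (K : H →L[ℂ] H) (x : ℕ → H) : Prop :=
  Orthonormal ℂ x ∧
    ∀ v : H, HasSum (fun n => ‖(inner ℂ v (x n) : ℂ)‖ ^ 2) (‖K.adjoint v‖ ^ 2)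

/- ### Auxiliary lemmas -/

private lemma konb_adjoint_eq_zero {E : Type*} [NormedAddCommGroup E] [InnerProductSpace ℂ E]
    [CompleteSpace E] (D : E →L[ℂ] E) (e : ℕ → E) (h : IsKONB D e) (v : E)
    (hv : ∀ n, (inner ℂ v (e n) : ℂ) = 0) : D.adjoint v = 0 := by
  have h0 : HasSum (fun n : ℕ => ‖(inner ℂ v (e n) : ℂ)‖ ^ 2) 0 := by
    have : (fun n : ℕ => ‖(inner ℂ v (e n) : ℂ)‖ ^ 2) = fun _ => 0 := by
      funext n; rw [hv n]; simp
    rw [this]; exact hasSum_zero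
  have := h0.unique (h.2 v)
  have hn : ‖D.adjoint v‖ = 0 := by
    nlinarith [norm_nonneg (D.adjoint v)]
  simpa using hn

private lemma konb_mem_closure {E : Type*} [NormedAddCommGroup E] [InnerProductSpace ℂ E]
    [CompleteSpace E] (D : E →L[ℂ] E) (e : ℕ → E) (h : IsKONB D e) (u : E) :
    D u ∈ (Submodule.span ℂ (Set.range e)).topologicalClosure := by
  set S : Submodule ℂ E := Submodule.span ℂ (Set.range e)
  rw [← Submodule.orthogonal_orthogonal_eq_closure]
  rw [Submodule.mem_orthogonal]
  intro v hv
  have hv' : ∀ n, (inner ℂ v (e n) : ℂ) = 0 := by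
    intro n
    have := (Submodule.mem_orthogonal S v).1 hv (e n) (Submodule.subset_span ⟨n, rfl⟩)
    rw [← inner_eq_zero_symm] at this
    exact this
  have hz := konb_adjoint_eq_zero D e h v hv'
  rw [← ContinuousLinearMap.adjoint_inner_left, hz, inner_zero_left]

private lemma konb_hasSum {E : Type*} [NormedAddCommGroup E] [InnerProductSpace ℂ E]
    [CompleteSpace E] (D : E →L[ℂ] E) (e : ℕ → E) (h : IsKONB D e) (w : E) :
    HasSum (fun n => (inner ℂ (e n) (D w) : ℂ) • e n) (D w) := by
  classical
  set S : Submodule ℂ E := Submodule.span ℂ (Set.range e) with hS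
  set M : Submodule ℂ E := S.topologicalClosure with hM
  haveI : CompleteSpace M := S.isClosed_topologicalClosure.completeSpace_coe
  have he : ∀ n, e n ∈ M := fun n =>
    Submodule.le_topologicalClosure S (Submodule.subset_span ⟨n, rfl⟩)
  set e' : ℕ → M := fun n => ⟨e n, he n⟩ with he'
  have he'on : Orthonormal ℂ e' := by
    rw [orthonormal_iff_ite]
    intro i j
    have := (orthonormal_iff_ite.mp h.1) i j
    simpa [he', Submodule.coe_inner] using this
  have hbot : (Submodule.span ℂ (Set.range e'))ᗮ = ⊥ := by
    rw [Submodule.eq_bot_iff]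
    rintro u hu
    have hu' : ∀ n, (inner ℂ (e n) (u : E) : ℂ) = 0 := by
      intro n
      have := (Submodule.mem_orthogonal _ u).1 hu (e' n) (Submodule.subset_span ⟨n, rfl⟩)
      simpa [he', Submodule.coe_inner] using this
    have huS : (u : E) ∈ Sᗮ := by
      rw [Submodule.mem_orthogonal]
      intro w hw
      induction hw using Submodule.span_induction with
      | mem w hw => obtain ⟨n, rfl⟩ := hw; exact hu' n
      | zero => simp
      | add _ _ _ _ h1 h2 => rw [inner_add_left, h1, h2, add_zero]
      | smul c _ _ h1 => rw [inner_smul_left, h1, mul_zero]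
    have huM : (u : E) ∈ Sᗮᗮ := by
      rw [Submodule.orthogonal_orthogonal_eq_closure]
      exact u.2
    have h0 : (inner ℂ (u : E) (u : E) : ℂ) = 0 :=
      (Submodule.mem_orthogonal _ _).1 huM (u : E) huS
    have : (u : E) = 0 := by rwa [inner_self_eq_zero] at h0
    exact Subtype.ext this
  set b : HilbertBasis ℕ ℂ M := HilbertBasis.mkOfOrthogonalEqBot he'on hbot with hb
  have hbe : ⇑b = e' := HilbertBasis.coe_mkOfOrthogonalEqBot he'on hbot
  have hsum := b.hasSum_orthogonalProjection (D w)
  have hproj : M.orthogonalProjectionOnto (D w) = ⟨D w, konb_mem_closure D e h w⟩ := by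
    have := Submodule.orthogonalProjectionOnto_mem_subspace_eq_self (K := M) ⟨D w, konb_mem_closure D e h w⟩
    simpa using this
  rw [hproj] at hsum
  have h3 := hsum.mapL M.subtypeL
  convert h3 using 2 with i
  exact congrArg (fun z : M => ((inner ℂ ((z : E)) (D w) : ℂ) • (z : E))) (congrFun hbe i).symm
  rfl

private lemma bessel_bound {H : Type*} [NormedAddCommGroup H] [InnerProductSpace ℂ H]
    [CompleteSpace H] (A : H →L[ℂ] H) (v : H) :
    ‖A.adjoint (A v)‖ ^ 2 ≤ ((‖A.adjoint‖ * ‖A‖) ^ 2 + 1) * ‖v‖ ^ 2 := by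
  have h1 : ‖A.adjoint (A v)‖ ≤ ‖A.adjoint‖ * ‖A v‖ := A.adjoint.le_opNorm (A v)
  have h2 : ‖A v‖ ≤ ‖A‖ * ‖v‖ := A.le_opNorm v
  have h3 : ‖A.adjoint (A v)‖ ≤ ‖A.adjoint‖ * ‖A‖ * ‖v‖ := by
    calc ‖A.adjoint (A v)‖ ≤ ‖A.adjoint‖ * ‖A v‖ := h1
    _ ≤ ‖A.adjoint‖ * (‖A‖ * ‖v‖) := mul_le_mul_of_nonneg_left h2 (norm_nonneg _)
    _ = ‖A.adjoint‖ * ‖A‖ * ‖v‖ := by ring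
  nlinarith [norm_nonneg (A.adjoint (A v)), sq_nonneg ‖v‖,
    mul_nonneg (mul_nonneg (norm_nonneg A.adjoint) (norm_nonneg A)) (norm_nonneg v)]

private lemma frame_of_parseval {H : Type*} [NormedAddCommGroup H] [InnerProductSpace ℂ H]
    [CompleteSpace H] (K : H →L[ℂ] H) (x : ℕ → H)
    (hps : ∀ v : H, HasSum (fun n => ‖(inner ℂ v (x n) : ℂ)‖ ^ 2) (‖K.adjoint v‖ ^ 2)) :
    IsKFrame K x := by
  refine ⟨1, ‖K.adjoint‖ ^ 2 + 1, one_pos, by positivity, fun v => ?_⟩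
  refine ⟨(hps v).summable, ?_, ?_⟩
  · rw [(hps v).tsum_eq, one_mul]
  · rw [(hps v).tsum_eq]
    have h1 : ‖K.adjoint v‖ ≤ ‖K.adjoint‖ * ‖v‖ := K.adjoint.le_opNorm v
    nlinarith [norm_nonneg (K.adjoint v), norm_nonneg v, norm_nonneg K.adjoint, sq_nonneg ‖v‖,
      mul_nonneg (norm_nonneg K.adjoint) (norm_nonneg v)]

section pairlemmas

variable {H₁ H₂ : Type*}
  [NormedAddCommGroup H₁] [InnerProductSpace ℂ H₁] [CompleteSpace H₁]
  [NormedAddCommGroup H₂] [InnerProductSpace ℂ H₂] [CompleteSpace H₂]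

private lemma dsum_apply_pair (K : H₁ →L[ℂ] H₁) (L : H₂ →L[ℂ] H₂) (a : H₁) (b : H₂) :
    dsum K L ((WithLp.equiv 2 (H₁ × H₂)).symm (a, b)) =
      (WithLp.equiv 2 (H₁ × H₂)).symm (K a, L b) := rfl

private lemma pair_inner (a c : H₁) (b d : H₂) :
    (inner ℂ ((WithLp.equiv 2 (H₁ × H₂)).symm (a, b)) ((WithLp.equiv 2 (H₁ × H₂)).symm (c, d)) : ℂ)
      = inner ℂ a c + inner ℂ b d := by
  simp [WithLp.prod_inner_apply]

private lemma pair_norm_sq (a : H₁) (b : H₂) :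
    ‖(WithLp.equiv 2 (H₁ × H₂)).symm (a, b)‖ ^ 2 = ‖a‖ ^ 2 + ‖b‖ ^ 2 := by
  simp [WithLp.prod_norm_sq_eq_of_L2]

private lemma dsum_adjoint_eq (K : H₁ →L[ℂ] H₁) (L : H₂ →L[ℂ] H₂) :
    (dsum K L).adjoint = dsum K.adjoint L.adjoint := by
  symm
  rw [ContinuousLinearMap.eq_adjoint_iff]
  intro u v
  have h1 : (dsum K.adjoint L.adjoint u).ofLp.1 = K.adjoint u.ofLp.1 := rfl
  have h2 : (dsum K.adjoint L.adjoint u).ofLp.2 = L.adjoint u.ofLp.2 := rfl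
  have h3 : (dsum K L v).ofLp.1 = K v.ofLp.1 := rfl
  have h4 : (dsum K L v).ofLp.2 = L v.ofLp.2 := rfl
  simp only [WithLp.prod_inner_apply, h1, h2, h3, h4,
    ContinuousLinearMap.adjoint_inner_left]

private lemma parseval_fst (K : H₁ →L[ℂ] H₁) (L : H₂ →L[ℂ] H₂)
    (x : ℕ → H₁) (y : ℕ → H₂) (h : IsKONB (dsum K L) (pairSeq x y)) (v : H₁) :
    HasSum (fun n => ‖(inner ℂ v (x n) : ℂ)‖ ^ 2) (‖K.adjoint v‖ ^ 2) := by
  have h2 := h.2 ((WithLp.equiv 2 (H₁ × H₂)).symm (v, 0))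
  have hfun : (fun n => ‖(inner ℂ ((WithLp.equiv 2 (H₁ × H₂)).symm (v, 0))
      (pairSeq x y n) : ℂ)‖ ^ 2) = fun n => ‖(inner ℂ v (x n) : ℂ)‖ ^ 2 := by
    funext n
    rw [show pairSeq x y n = (WithLp.equiv 2 (H₁ × H₂)).symm (x n, y n) from rfl, pair_inner]
    simp
  have hnorm : ‖(dsum K L).adjoint ((WithLp.equiv 2 (H₁ × H₂)).symm (v, 0))‖ ^ 2
      = ‖K.adjoint v‖ ^ 2 := by
    rw [dsum_adjoint_eq, dsum_apply_pair, pair_norm_sq]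
    simp
  rwa [hfun, hnorm] at h2

private lemma parseval_snd (K : H₁ →L[ℂ] H₁) (L : H₂ →L[ℂ] H₂)
    (x : ℕ → H₁) (y : ℕ → H₂) (h : IsKONB (dsum K L) (pairSeq x y)) (v : H₂) :
    HasSum (fun n => ‖(inner ℂ v (y n) : ℂ)‖ ^ 2) (‖L.adjoint v‖ ^ 2) := by
  have h2 := h.2 ((WithLp.equiv 2 (H₁ × H₂)).symm (0, v))
  have hfun : (fun n => ‖(inner ℂ ((WithLp.equiv 2 (H₁ × H₂)).symm (0, v))
      (pairSeq x y n) : ℂ)‖ ^ 2) = fun n => ‖(inner ℂ v (y n) : ℂ)‖ ^ 2 := by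
    funext n
    rw [show pairSeq x y n = (WithLp.equiv 2 (H₁ × H₂)).symm (x n, y n) from rfl, pair_inner]
    simp
  have hnorm : ‖(dsum K L).adjoint ((WithLp.equiv 2 (H₁ × H₂)).symm (0, v))‖ ^ 2
      = ‖L.adjoint v‖ ^ 2 := by
    rw [dsum_adjoint_eq, dsum_apply_pair, pair_norm_sq]
    simp
  rwa [hfun, hnorm] at h2

/-- First-component projection as a continuous linear map. -/
private def fstL : WithLp 2 (H₁ × H₂) →L[ℂ] H₁ :=
  (ContinuousLinearMap.fst ℂ H₁ H₂) ∘L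
    ((WithLp.prodContinuousLinearEquiv 2 ℂ H₁ H₂) : WithLp 2 (H₁ × H₂) →L[ℂ] (H₁ × H₂))

/-- Second-component projection as a continuous linear map. -/
private def sndL : WithLp 2 (H₁ × H₂) →L[ℂ] H₂ :=
  (ContinuousLinearMap.snd ℂ H₁ H₂) ∘L
    ((WithLp.prodContinuousLinearEquiv 2 ℂ H₁ H₂) : WithLp 2 (H₁ × H₂) →L[ℂ] (H₁ × H₂))

end pairlemmas

set_option maxHeartbeats 1000000 in
/-- let `K ≠ 0`, `L ≠ 0` and let `{xₙ ⊕ yₙ}` be a `K ⊕ L`-orthonormal basis for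
`H₁ ⊕ H₂`, with `T₁, T₂` the synthesis operators of `{xₙ}, {yₙ}`. Then:
(a) `{K*(xₙ) ⊕ L*(yₙ)}` is the unique `K ⊕ L`-dual frame to `{xₙ ⊕ yₙ}`;
(b) `{xₙ}` is a non-`K`-minimal `K`-frame for `H₁` with `K`-dual frame `{K*(xₙ)}`;
(c) `{yₙ}` is a non-`L`-minimal `L`-frame for `H₂` with `L`-dual frame `{L*(yₙ)}`. -/
theorem pair_konb_properties (K : H₁ →L[ℂ] H₁) (L : H₂ →L[ℂ] H₂)
    (hK : K ≠ 0) (hL : L ≠ 0)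
    (x : ℕ → H₁) (y : ℕ → H₂)
    (h : IsKONB (dsum K L) (pairSeq x y))
    (T₁ : lp (fun _ : ℕ => ℂ) 2 →L[ℂ] H₁)
    (hT₁ : ∀ a : lp (fun _ : ℕ => ℂ) 2, HasSum (fun n => a n • x n) (T₁ a))
    (T₂ : lp (fun _ : ℕ => ℂ) 2 →L[ℂ] H₂)
    (hT₂ : ∀ a : lp (fun _ : ℕ => ℂ) 2, HasSum (fun n => a n • y n) (T₂ a)) :
    (IsKDual (dsum K L) (pairSeq (fun n => K.adjoint (x n)) (fun n => L.adjoint (y n)))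
        (pairSeq x y) ∧
      ∀ d : ℕ → WithLp 2 (H₁ × H₂), IsKDual (dsum K L) d (pairSeq x y) →
        d = pairSeq (fun n => K.adjoint (x n)) (fun n => L.adjoint (y n))) ∧
    (IsKFrame K x ∧ ¬ Function.Injective T₁ ∧ IsKDual K (fun n => K.adjoint (x n)) x) ∧
    (IsKFrame L y ∧ ¬ Function.Injective T₂ ∧ IsKDual L (fun n => L.adjoint (y n)) y) := by
  classical
  set D : WithLp 2 (H₁ × H₂) →L[ℂ] WithLp 2 (H₁ × H₂) := dsum K L with hD
  set e : ℕ → WithLp 2 (H₁ × H₂) := pairSeq x y with he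
  -- The K⊕L-adjoint maps the basis to the candidate dual
  have hfe : ∀ n, pairSeq (fun n => K.adjoint (x n)) (fun n => L.adjoint (y n)) n
      = D.adjoint (e n) := by
    intro n
    rw [hD, dsum_adjoint_eq]
    rfl
  -- (a) existence
  have hadual : IsKDual D (pairSeq (fun n => K.adjoint (x n)) (fun n => L.adjoint (y n))) e := by
    constructor
    · refine ⟨(‖D.adjoint‖ * ‖D‖) ^ 2 + 1, by positivity, fun v => ?_⟩
      have hfun : (fun n => ‖(inner ℂ v (pairSeq (fun n => K.adjoint (x n))
          (fun n => L.adjoint (y n)) n) : ℂ)‖ ^ 2)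
          = fun n => ‖(inner ℂ (D v) (e n) : ℂ)‖ ^ 2 := by
        funext n
        rw [hfe n, ContinuousLinearMap.adjoint_inner_right]
      rw [hfun]
      refine ⟨(h.2 (D v)).summable, ?_⟩
      rw [(h.2 (D v)).tsum_eq]
      exact bessel_bound D v
    · intro v
      have hsum := konb_hasSum D e h v
      have hfun : (fun n => (inner ℂ (pairSeq (fun n => K.adjoint (x n))
          (fun n => L.adjoint (y n)) n) v : ℂ) • e n)
          = fun n => (inner ℂ (e n) (D v) : ℂ) • e n := by
        funext n
        rw [hfe n, ContinuousLinearMap.adjoint_inner_left]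
      rw [hfun]
      exact hsum
  -- (a) uniqueness
  have hauniq : ∀ d : ℕ → WithLp 2 (H₁ × H₂), IsKDual D d e →
      d = pairSeq (fun n => K.adjoint (x n)) (fun n => L.adjoint (y n)) := by
    intro d hd
    funext m
    apply ext_inner_right ℂ
    intro v
    have hs := (hd.2 v).mapL (innerSL ℂ (e m))
    have hfun : (fun n => (innerSL ℂ (e m)) ((inner ℂ (d n) v : ℂ) • e n))
        = fun n => if n = m then (inner ℂ (d m) v : ℂ) else 0 := by
      funext n
      simp only [innerSL_apply_apply, inner_smul_right]
      rcases eq_or_ne n m with rfl | hne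
      · rw [if_pos rfl, (orthonormal_iff_ite.mp h.1) n n, if_pos rfl, mul_one]
      · rw [if_neg hne, (orthonormal_iff_ite.mp h.1) m n, if_neg (Ne.symm hne), mul_zero]
    rw [hfun] at hs
    have h2 : (inner ℂ (d m) v : ℂ) = (innerSL ℂ (e m)) (D v) :=
      (hasSum_ite_eq m ((inner ℂ (d m) v : ℂ))).unique hs
    rw [h2, innerSL_apply_apply, ← ContinuousLinearMap.adjoint_inner_left, ← hfe m]
  -- (b) frame property
  have hframe₁ : IsKFrame K x := frame_of_parseval K x (parseval_fst K L x y h)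
  have hframe₂ : IsKFrame L y := frame_of_parseval L y (parseval_snd K L x y h)
  -- projections applied to basis expansions
  have hexp : ∀ w : WithLp 2 (H₁ × H₂),
      HasSum (fun n => (inner ℂ (e n) (D w) : ℂ) • x n) (fstL (D w)) ∧
      HasSum (fun n => (inner ℂ (e n) (D w) : ℂ) • y n) (sndL (D w)) := by
    intro w
    have hsum := konb_hasSum D e h w
    constructor
    · have h1 := hsum.mapL fstL
      have hfun : (fun n => fstL ((inner ℂ (e n) (D w) : ℂ) • e n))
          = fun n => (inner ℂ (e n) (D w) : ℂ) • x n := by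
        funext n
        rw [map_smul]
        rfl
      rwa [hfun] at h1
    · have h1 := hsum.mapL sndL
      have hfun : (fun n => sndL ((inner ℂ (e n) (D w) : ℂ) • e n))
          = fun n => (inner ℂ (e n) (D w) : ℂ) • y n := by
        funext n
        rw [map_smul]
        rfl
      rwa [hfun] at h1
  -- (b) dual property for {K* xₙ}
  have hdual₁ : IsKDual K (fun n => K.adjoint (x n)) x := by
    constructor
    · refine ⟨(‖K.adjoint‖ * ‖K‖) ^ 2 + 1, by positivity, fun v => ?_⟩
      have hfun : (fun n => ‖(inner ℂ v (K.adjoint (x n)) : ℂ)‖ ^ 2)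
          = fun n => ‖(inner ℂ (K v) (x n) : ℂ)‖ ^ 2 := by
        funext n
        rw [ContinuousLinearMap.adjoint_inner_right]
      rw [hfun]
      refine ⟨(parseval_fst K L x y h (K v)).summable, ?_⟩
      rw [(parseval_fst K L x y h (K v)).tsum_eq]
      exact bessel_bound K v
    · intro v
      have hw := (hexp ((WithLp.equiv 2 (H₁ × H₂)).symm (v, 0))).1
      have hDw : D ((WithLp.equiv 2 (H₁ × H₂)).symm (v, 0))
          = (WithLp.equiv 2 (H₁ × H₂)).symm (K v, 0) := by
        rw [hD, dsum_apply_pair, map_zero]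
      rw [hDw] at hw
      have hfst : fstL ((WithLp.equiv 2 (H₁ × H₂)).symm (K v, (0 : H₂))) = K v := rfl
      rw [hfst] at hw
      have hfun : (fun n => (inner ℂ (K.adjoint (x n)) v : ℂ) • x n)
          = fun n => (inner ℂ (e n) ((WithLp.equiv 2 (H₁ × H₂)).symm (K v, (0:H₂))) : ℂ) • x n := by
        funext n
        rw [ContinuousLinearMap.adjoint_inner_left,
          show e n = (WithLp.equiv 2 (H₁ × H₂)).symm (x n, y n) from rfl, pair_inner]
        simp
      rw [hfun]
      exact hw
  -- (c) dual property for {L* yₙ}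
  have hdual₂ : IsKDual L (fun n => L.adjoint (y n)) y := by
    constructor
    · refine ⟨(‖L.adjoint‖ * ‖L‖) ^ 2 + 1, by positivity, fun v => ?_⟩
      have hfun : (fun n => ‖(inner ℂ v (L.adjoint (y n)) : ℂ)‖ ^ 2)
          = fun n => ‖(inner ℂ (L v) (y n) : ℂ)‖ ^ 2 := by
        funext n
        rw [ContinuousLinearMap.adjoint_inner_right]
      rw [hfun]
      refine ⟨(parseval_snd K L x y h (L v)).summable, ?_⟩
      rw [(parseval_snd K L x y h (L v)).tsum_eq]
      exact bessel_bound L v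
    · intro v
      have hw := (hexp ((WithLp.equiv 2 (H₁ × H₂)).symm (0, v))).2
      have hDw : D ((WithLp.equiv 2 (H₁ × H₂)).symm (0, v))
          = (WithLp.equiv 2 (H₁ × H₂)).symm (0, L v) := by
        rw [hD, dsum_apply_pair, map_zero]
      rw [hDw] at hw
      have hsnd : sndL ((WithLp.equiv 2 (H₁ × H₂)).symm ((0 : H₁), L v)) = L v := rfl
      rw [hsnd] at hw
      have hfun : (fun n => (inner ℂ (L.adjoint (y n)) v : ℂ) • y n)
          = fun n => (inner ℂ (e n) ((WithLp.equiv 2 (H₁ × H₂)).symm ((0:H₁), L v)) : ℂ) • y n := by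
        funext n
        rw [ContinuousLinearMap.adjoint_inner_left,
          show e n = (WithLp.equiv 2 (H₁ × H₂)).symm (x n, y n) from rfl, pair_inner]
        simp
      rw [hfun]
      exact hw
  -- non-injectivity of T₁
  have hinj₁ : ¬ Function.Injective T₁ := by
    obtain ⟨u, hu⟩ : ∃ u : H₂, L u ≠ 0 := by
      by_contra hcon
      push_neg at hcon
      exact hL (ContinuousLinearMap.ext fun u => by rw [hcon u]; rfl)
    set w : WithLp 2 (H₁ × H₂) := (WithLp.equiv 2 (H₁ × H₂)).symm (0, L u) with hwdef
    have hDw : D ((WithLp.equiv 2 (H₁ × H₂)).symm (0, u)) = w := by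
      rw [hD, dsum_apply_pair, map_zero]
    -- membership in ℓ²
    have hsummable : Summable (fun n => ‖(inner ℂ (e n) w : ℂ)‖ ^ 2) := by
      have := (h.2 w).summable
      have hfun : (fun n => ‖(inner ℂ w (e n) : ℂ)‖ ^ 2)
          = fun n => ‖(inner ℂ (e n) w : ℂ)‖ ^ 2 := by
        funext n; rw [norm_inner_symm]
      rwa [hfun] at this
    have hmem : Memℓp (fun n => (inner ℂ (e n) w : ℂ)) 2 := by
      apply memℓp_gen
      have h2 : ((2 : ℝ≥0∞)).toReal = ((2 : ℕ) : ℝ) := by simp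
      rw [h2]
      simp only [Real.rpow_natCast]
      exact_mod_cast hsummable
    set a : lp (fun _ : ℕ => ℂ) 2 := ⟨fun n => (inner ℂ (e n) w : ℂ), hmem⟩ with ha
    have haap : ∀ n, a n = (inner ℂ (e n) w : ℂ) := fun n => rfl
    have hexpw := hexp ((WithLp.equiv 2 (H₁ × H₂)).symm (0, u))
    rw [hDw] at hexpw
    have hT₁a : T₁ a = 0 := by
      have h1 := hT₁ a
      have hfst : fstL w = 0 := rfl
      have h2 := hexpw.1
      rw [hfst] at h2
      exact (h1.unique h2)
    have hT₂a : T₂ a = L u := by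
      have h1 := hT₂ a
      have hsnd : sndL w = L u := rfl
      have h2 := hexpw.2
      rw [hsnd] at h2
      exact (h1.unique h2)
    have hane : a ≠ 0 := by
      intro h0
      rw [h0, map_zero] at hT₂a
      exact hu hT₂a.symm
    intro hinj
    apply hane
    apply hinj
    rw [hT₁a, map_zero]
  -- non-injectivity of T₂
  have hinj₂ : ¬ Function.Injective T₂ := by
    obtain ⟨u, hu⟩ : ∃ u : H₁, K u ≠ 0 := by
      by_contra hcon
      push_neg at hcon
      exact hK (ContinuousLinearMap.ext fun u => by rw [hcon u]; rfl)
    set w : WithLp 2 (H₁ × H₂) := (WithLp.equiv 2 (H₁ × H₂)).symm (K u, 0) with hwdef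
    have hDw : D ((WithLp.equiv 2 (H₁ × H₂)).symm (u, 0)) = w := by
      rw [hD, dsum_apply_pair, map_zero]
    have hsummable : Summable (fun n => ‖(inner ℂ (e n) w : ℂ)‖ ^ 2) := by
      have := (h.2 w).summable
      have hfun : (fun n => ‖(inner ℂ w (e n) : ℂ)‖ ^ 2)
          = fun n => ‖(inner ℂ (e n) w : ℂ)‖ ^ 2 := by
        funext n; rw [norm_inner_symm]
      rwa [hfun] at this
    have hmem : Memℓp (fun n => (inner ℂ (e n) w : ℂ)) 2 := by
      apply memℓp_gen
      have h2 : ((2 : ℝ≥0∞)).toReal = ((2 : ℕ) : ℝ) := by simp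
      rw [h2]
      simp only [Real.rpow_natCast]
      exact_mod_cast hsummable
    set a : lp (fun _ : ℕ => ℂ) 2 := ⟨fun n => (inner ℂ (e n) w : ℂ), hmem⟩ with ha
    have hexpw := hexp ((WithLp.equiv 2 (H₁ × H₂)).symm (u, 0))
    rw [hDw] at hexpw
    have hT₂a : T₂ a = 0 := by
      have h1 := hT₂ a
      have hsnd : sndL w = 0 := rfl
      have h2 := hexpw.2
      rw [hsnd] at h2
      exact (h1.unique h2)
    have hT₁a : T₁ a = K u := by
      have h1 := hT₁ a
      have hfst : fstL w = K u := rfl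
      have h2 := hexpw.1
      rw [hfst] at h2
      exact (h1.unique h2)
    have hane : a ≠ 0 := by
      intro h0
      rw [h0, map_zero] at hT₁a
      exact hu hT₁a.symm
    intro hinj
    apply hane
    apply hinj
    rw [hT₂a, map_zero]
  exact ⟨⟨hadual, hauniq⟩, ⟨hframe₁, hinj₁, hdual₁⟩, ⟨hframe₂, hinj₂, hdual₂⟩⟩
end
end
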